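/- arXiv:math/0301141 — 2 statements merged into one kernel-verified Lean document; each statement's English description precedes it below -/
import Mathlib

section
/- For every integer n ≥ 1, with l := x_0^{-2} x_1 x_0^{n+1} x_1^{-n} in Thompson's group F, the element x_0 l has word length exactly 2n + 3 with respect to {x_0, x_1}; consequently the two-step path l → x_0 l → x_0^2 l leaves the ball B_{2n+2}. -/
namespace ThompsonF

/-- The defining relators of Thompson's group `F`:
for `i < j`, the relator `x_i⁻¹ * x_j * x_i * x_{j+1}⁻¹`. -/
def rels : Set (FreeGroup ℕ) :=
  {r | ∃ i j : ℕ, i < j ∧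
    r = (FreeGroup.of i)⁻¹ * FreeGroup.of j * FreeGroup.of i * (FreeGroup.of (j + 1))⁻¹}

/-- Thompson's group `F`, presented by `⟨x₀, x₁, … ∣ x_i⁻¹ x_j x_i = x_{j+1} for i < j⟩`. -/
abbrev F : Type := PresentedGroup rels

/-- The generator `x_i` of Thompson's group `F`. -/
def x (i : ℕ) : F := PresentedGroup.of i

/-- The symmetrized generating set `{x₀, x₀⁻¹, x₁, x₁⁻¹}`. -/
def gens : Set F := {x 0, (x 0)⁻¹, x 1, (x 1)⁻¹}

/-- The word length `ℓ(g)` with respect to `{x₀, x₁}`: the least `m` such that `g` is a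
product of `m` elements of `{x₀, x₀⁻¹, x₁, x₁⁻¹}`. -/
noncomputable def len (g : F) : ℕ :=
  sInf {m | ∃ w : List F, w.length = m ∧ (∀ a ∈ w, a ∈ gens) ∧ w.prod = g}

/-- `IsPathIn n f g m c` means `c 0 = f, c 1, …, c m = g` is a path of length `m`
from `f` to `g` inside the ball `B_n`: consecutive vertices differ by left
multiplication by a generator, and every vertex has length at most `n`. -/
def IsPathIn (n : ℕ) (f g : F) (m : ℕ) (c : ℕ → F) : Prop :=
  c 0 = f ∧ c m = g ∧ (∀ k < m, c (k + 1) * (c k)⁻¹ ∈ gens) ∧ ∀ k ≤ m, len (c k) ≤ n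

/-- The element `l = x₀⁻² x₁ x₀^{n+1} x₁⁻ⁿ`. -/
def l (n : ℕ) : F := x 0 ^ (-2 : ℤ) * x 1 * x 0 ^ ((n : ℤ) + 1) * x 1 ^ (-(n : ℤ))

/-- The element `r = x₀² l`. -/
def r (n : ℕ) : F := x 0 ^ 2 * l n

set_option linter.unreachableTactic false
set_option linter.unusedTactic false
set_option linter.unnecessarySeqFocus false

abbrev X : Type := ℕ → Bool

def zeroX : X := fun _ => false

def consX (b : Bool) (s : X) : X := fun n => match n with
  | 0 => b
  | n + 1 => s n

def tailX (s : X) : X := fun n => s (n + 1)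

@[simp] lemma consX_zero (b : Bool) (s : X) : consX b s 0 = b := rfl
@[simp] lemma consX_succ (b : Bool) (s : X) (n : ℕ) : consX b s (n + 1) = s n := rfl
@[simp] lemma tailX_apply (s : X) (n : ℕ) : tailX s n = s (n + 1) := rfl
@[simp] lemma tailX_consX (b : Bool) (s : X) : tailX (consX b s) = s := by
  funext n; rfl

lemma etaX (s : X) : consX (s 0) (tailX s) = s := by
  funext n; cases n <;> rfl

lemma eta2X (s : X) : consX (s 0) (consX (s 1) (tailX (tailX s))) = s := by
  funext n; rcases n with _ | n
  · rfl
  · rcases n with _ | n <;> rfl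

def aF (s : X) : X :=
  if s 0 then (if s 1 then tailX s else consX false (consX true (tailX (tailX s))))
  else consX false s

def AF (s : X) : X :=
  if s 0 then consX true s
  else (if s 1 then consX true (consX false (tailX (tailX s))) else tailX s)

def bF (s : X) : X := if s 0 then consX true (aF (tailX s)) else s

def BF (s : X) : X := if s 0 then consX true (AF (tailX s)) else s

lemma aF_AF (s : X) : aF (AF s) = s := by
  rcases h0 : s 0 <;> rcases h1 : s 1
  · -- 00 : AF s = tailX s, head false
    have ht : tailX s 0 = false := by simpa using h1
    simp only [AF, h0, h1, Bool.false_eq_true, if_false]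
    simp only [aF, ht, Bool.false_eq_true, if_false]
    rw [← h0]; exact etaX s
  · -- 01 : AF s = consX true (consX false t2)
    simp only [AF, h0, h1, Bool.false_eq_true, if_false, if_true]
    simp only [aF, consX_zero, consX_succ, if_true, Bool.false_eq_true, if_false,
      tailX_consX]
    rw [← h0, ← h1]; exact eta2X s
  all_goals
    simp [AF, aF, h0]

lemma AF_aF (s : X) : AF (aF s) = s := by
  rcases h0 : s 0 <;> rcases h1 : s 1
  · -- 0* : aF s = consX false s
    simp only [aF, h0, Bool.false_eq_true, if_false]
    simp only [AF, consX_zero, consX_succ, h0, Bool.false_eq_true, if_false, tailX_consX]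
  · simp only [aF, h0, Bool.false_eq_true, if_false]
    simp only [AF, consX_zero, consX_succ, h0, Bool.false_eq_true, if_false, tailX_consX]
  · -- 10 : aF s = consX false (consX true t2)
    simp only [aF, h0, h1, if_true, Bool.false_eq_true, if_false]
    simp only [AF, consX_zero, consX_succ, Bool.false_eq_true, if_false, if_true,
      tailX_consX]
    rw [← h0, ← h1]; exact eta2X s
  · -- 11 : aF s = tailX s, head = s 1 = true
    have ht : tailX s 0 = true := by simpa using h1
    simp only [aF, h0, h1, if_true]
    simp only [AF, ht, if_true]
    rw [← h0]; exact etaX s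

def pa : Equiv.Perm X := ⟨aF, AF, AF_aF, aF_AF⟩

lemma bF_BF (s : X) : bF (BF s) = s := by
  rcases h0 : s 0
  · simp [BF, bF, h0]
  · simp only [BF, h0, if_true]
    simp only [bF, consX_zero, if_true, tailX_consX, aF_AF]
    rw [← h0]; exact etaX s

lemma BF_bF (s : X) : BF (bF s) = s := by
  rcases h0 : s 0
  · simp [BF, bF, h0]
  · simp only [bF, h0, if_true]
    simp only [BF, consX_zero, if_true, tailX_consX, AF_aF]
    rw [← h0]; exact etaX s

def pb : Equiv.Perm X := ⟨bF, BF, BF_bF, bF_BF⟩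

@[simp] lemma pa_apply (s : X) : pa s = aF s := rfl
@[simp] lemma pa_inv_apply (s : X) : pa⁻¹ s = AF s := rfl
@[simp] lemma pb_apply (s : X) : pb s = bF s := rfl
@[simp] lemma pb_inv_apply (s : X) : pb⁻¹ s = BF s := rfl



/-! ### powers of `pa` pointwise, and the key relation -/

def iterConsX : ℕ → X → X
  | 0, s => s
  | k + 1, s => consX true (iterConsX k s)

@[simp] lemma iterConsX_zero (s : X) : iterConsX 0 s = s := rfl
@[simp] lemma iterConsX_succ (k : ℕ) (s : X) :
    iterConsX (k + 1) s = consX true (iterConsX k s) := rfl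

lemma pa_pow_apply (k : ℕ) (s : X) : (pa ^ k) s = aF^[k] s := by
  induction k generalizing s with
  | zero => simp
  | succ k ih =>
    rw [pow_succ, Equiv.Perm.mul_apply, Function.iterate_succ_apply, ih]
    rfl

lemma pa_pow_inv_apply (k : ℕ) (s : X) : (pa ^ k)⁻¹ s = AF^[k] s := by
  induction k generalizing s with
  | zero => simp
  | succ k ih =>
    rw [pow_succ, mul_inv_rev, Equiv.Perm.mul_apply, Function.iterate_succ_apply', ih]
    rfl

def Dfun (k : ℕ) (s : X) : X := AF^[k] (bF (aF^[k] s))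

lemma Dfun_succ (k : ℕ) (s : X) : Dfun (k + 1) s = AF (Dfun k (aF s)) := by
  show AF^[k+1] (bF (aF^[k+1] s)) = AF (AF^[k] (bF (aF^[k] (aF s))))
  rw [Function.iterate_succ_apply' AF, Function.iterate_succ_apply aF]

lemma aF_two_true (s : X) (h0 : s 0 = true) (h1 : s 1 = true) : aF s = tailX s := by
  simp [aF, h0, h1]

lemma aF_iterConsX (k : ℕ) (s : X) (hk : 1 ≤ k) :
    aF (iterConsX (k + 1) s) = iterConsX k s := by
  obtain ⟨k, rfl⟩ := Nat.exists_eq_add_of_le hk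
  rw [show 1 + k + 1 = (k + 1) + 1 by ring, show 1 + k = k + 1 by ring]
  rw [iterConsX_succ (k+1), aF_two_true] <;> simp

lemma AF_true (s : X) (h0 : s 0 = true) : AF s = consX true s := by simp [AF, h0]

lemma AF_iterConsX (k : ℕ) (s : X) (hk : 1 ≤ k) :
    AF (iterConsX k s) = iterConsX (k + 1) s := by
  obtain ⟨k, rfl⟩ := Nat.exists_eq_add_of_le hk
  rw [show 1 + k = k + 1 by ring]
  rw [AF_true] <;> simp

lemma bF_true (s : X) (h0 : s 0 = true) : bF s = consX true (aF (tailX s)) := by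
  simp [bF, h0]

lemma BF_true (s : X) (h0 : s 0 = true) : BF s = consX true (AF (tailX s)) := by
  simp [BF, h0]

lemma bF_false (s : X) (h0 : s 0 = false) : bF s = s := by simp [bF, h0]
lemma BF_false (s : X) (h0 : s 0 = false) : BF s = s := by simp [BF, h0]

/-- `Dfun` on a stream starting with `k+1` trues. -/
lemma Dfun_spec1 (k : ℕ) (w : X) :
    Dfun k (iterConsX (k + 1) w) = iterConsX (k + 1) (aF w) := by
  induction k with
  | zero =>
    show bF (consX true w) = consX true (aF w)
    rw [bF_true _ (by simp)]; simp
  | succ k ih =>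
    rw [Dfun_succ, aF_iterConsX _ _ (by omega), ih, AF_iterConsX _ _ (by omega)]

/-- `Dfun k` fixes any stream with a false among its first `k+1` entries. -/
lemma Dfun_spec2 (k : ℕ) (s : X) (h : ∃ i ≤ k, s i = false) : Dfun k s = s := by
  induction k generalizing s with
  | zero =>
    obtain ⟨i, hi, hf⟩ := h
    interval_cases i
    show bF s = s
    exact bF_false s hf
  | succ k ih =>
    rw [Dfun_succ]
    rcases h0 : s 0 with _ | _
    · -- aF s = consX false s, fixed by Dfun k since first entry false
      have : aF s = consX false s := by simp [aF, h0]
      rw [this, ih _ ⟨0, by omega, rfl⟩, ← this, AF_aF]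
    · rcases h1 : s 1 with _ | _
      · have : aF s = consX false (consX true (tailX (tailX s))) := by
          simp [aF, h0, h1]
        rw [this, ih _ ⟨0, by omega, rfl⟩, ← this, AF_aF]
      · -- s starts with two trues; the false is at index ≥ 2
        obtain ⟨i, hi, hf⟩ := h
        have hi2 : 2 ≤ i := by
          rcases i with _ | i
          · rw [h0] at hf; exact absurd hf (by simp)
          · rcases i with _ | i
            · rw [h1] at hf; exact absurd hf (by simp)
            · omega
        rw [aF_two_true s h0 h1, ih _ ⟨i - 1, by omega, by
          show s (i - 1 + 1) = false
          rwa [show i - 1 + 1 = i by omega]⟩]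
        rw [AF_true _ (by simpa using h1), ← h0, etaX]

lemma startsTrue_eta (k : ℕ) (s : X) (h : ∀ i < k, s i = true) :
    s = iterConsX k (fun n => s (n + k)) := by
  induction k generalizing s with
  | zero => simp
  | succ k ih =>
    have h0 : s 0 = true := h 0 (by omega)
    have ht := ih (tailX s) (fun i hi => by simpa [tailX] using h (i+1) (by omega))
    have hfun : (fun n => tailX s (n + k)) = fun n => s (n + (k + 1)) := by
      funext n; rfl
    calc s = consX (s 0) (tailX s) := (etaX s).symm
    _ = consX true (iterConsX k fun n => tailX s (n + k)) := by rw [h0, ← ht]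
    _ = iterConsX (k+1) (fun n => s (n + (k+1))) := by rw [hfun]; rfl

/-- The key relation: `pb⁻¹ * (pa^k)⁻¹ * pb * pa^k * pb = (pa^(k+1))⁻¹ * pb * pa^(k+1)`
for `k ≥ 1`, in the pointwise form. -/
lemma key_pointwise (k : ℕ) (hk : 1 ≤ k) (s : X) :
    BF (Dfun k (bF s)) = Dfun (k + 1) s := by
  rcases h0 : s 0 with _ | _
  · rw [bF_false s h0, Dfun_spec2 k s ⟨0, by omega, h0⟩, BF_false s h0,
      Dfun_spec2 (k+1) s ⟨0, by omega, h0⟩]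
  · by_cases hv : ∀ i < k + 1, tailX s i = true
    · -- tail of s starts with k+1 trues
      set w : X := fun n => tailX s (n + (k+1)) with hw
      have hts : tailX s = iterConsX (k + 1) w := startsTrue_eta (k+1) (tailX s) hv
      have hseq : s = iterConsX (k + 2) w := by
        conv_lhs => rw [← etaX s, h0, hts]
        rfl
      rw [bF_true s h0, hts, aF_iterConsX _ _ (by omega), ← iterConsX_succ,
        Dfun_spec1, BF_true _ (by simp), iterConsX_succ, tailX_consX,
        AF_iterConsX _ _ (by omega), ← iterConsX_succ, hseq, Dfun_spec1]
    · push_neg at hv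
      obtain ⟨i, hik, hif⟩ := hv
      have hif' : tailX s i = false := by simpa using hif
      have hsf : s (i + 1) = false := by simpa [tailX] using hif'
      have hfix2 : Dfun (k + 1) s = s := Dfun_spec2 (k+1) s ⟨i + 1, by omega, hsf⟩
      rw [hfix2, bF_true s h0]
      have hex : ∃ j ≤ k - 1, aF (tailX s) j = false := by
        rcases ht0 : tailX s 0 with _ | _
        · have ht0' : s 1 = false := by simpa [tailX] using ht0
          refine ⟨0, by omega, ?_⟩
          rw [show aF (tailX s) = consX false (tailX s) from by simp [aF, ht0']]
          simp
        · rcases ht1 : tailX s 1 with _ | _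
          · have ht0' : s 1 = true := by simpa [tailX] using ht0
            have ht1' : s 2 = false := by simpa [tailX] using ht1
            refine ⟨0, by omega, ?_⟩
            rw [show aF (tailX s) = consX false (consX true (tailX (tailX (tailX s))))
              from by simp [aF, ht0', ht1']]
            simp
          · -- i ≥ 2
            have hi2 : 2 ≤ i := by
              rcases i with _ | i
              · rw [ht0] at hif'; exact absurd hif' (by simp)
              · rcases i with _ | i
                · rw [ht1] at hif'; exact absurd hif' (by simp)
                · omega
            refine ⟨i - 1, by omega, ?_⟩
            rw [aF_two_true _ ht0 ht1]
            show tailX s (i - 1 + 1) = false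
            rwa [show i - 1 + 1 = i by omega]
      obtain ⟨j, hj, hjf⟩ := hex
      rw [Dfun_spec2 k _ ⟨j + 1, by omega, by simpa using hjf⟩]
      rw [BF_true _ (by simp), tailX_consX, AF_aF, ← h0, etaX]

lemma key_perm (k : ℕ) (hk : 1 ≤ k) :
    pb⁻¹ * ((pa ^ k)⁻¹ * pb * pa ^ k) * pb = (pa ^ (k+1))⁻¹ * pb * pa ^ (k+1) := by
  ext s
  have lhs : (pb⁻¹ * ((pa ^ k)⁻¹ * pb * pa ^ k) * pb) s = BF (Dfun k (bF s)) := by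
    simp [Equiv.Perm.mul_apply, Dfun, pa_pow_apply, pa_pow_inv_apply]
  have rhs : ((pa ^ (k+1))⁻¹ * pb * pa ^ (k+1)) s = Dfun (k+1) s := by
    simp [Equiv.Perm.mul_apply, Dfun, pa_pow_apply, pa_pow_inv_apply]
  rw [lhs, rhs, key_pointwise k hk]

/-! ### the homomorphism `τ : F →* Perm X` -/

def fgen : ℕ → Equiv.Perm X
  | 0 => pa
  | j + 1 => (pa ^ j)⁻¹ * pb * pa ^ j

lemma fgen_rel (i j : ℕ) (hij : i < j) : (fgen i)⁻¹ * fgen j * fgen i = fgen (j + 1) := by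
  rcases j with _ | j
  · omega
  rcases i with _ | i
  · -- i = 0
    show pa⁻¹ * ((pa ^ j)⁻¹ * pb * pa ^ j) * pa = (pa ^ (j+1))⁻¹ * pb * pa ^ (j+1)
    rw [pow_succ, mul_inv_rev]
    group
  · -- i = i'+1, j = j'+1, i' < j'
    have hij' : i < j := by omega
    obtain ⟨k, hk1, rfl⟩ : ∃ k, 1 ≤ k ∧ j = i + k := ⟨j - i, by omega, by omega⟩
    have key := key_perm k hk1
    have conj := congrArg (fun z => (pa ^ i)⁻¹ * z * pa ^ i) key
    show ((pa ^ i)⁻¹ * pb * pa ^ i)⁻¹ * ((pa ^ (i+k))⁻¹ * pb * pa ^ (i+k)) *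
        ((pa ^ i)⁻¹ * pb * pa ^ i) = (pa ^ (i+k+1))⁻¹ * pb * pa ^ (i+k+1)
    calc ((pa ^ i)⁻¹ * pb * pa ^ i)⁻¹ * ((pa ^ (i+k))⁻¹ * pb * pa ^ (i+k)) *
        ((pa ^ i)⁻¹ * pb * pa ^ i)
        = (pa ^ i)⁻¹ * (pb⁻¹ * ((pa ^ k)⁻¹ * pb * pa ^ k) * pb) * pa ^ i := by
          rw [pow_add]; group
      _ = (pa ^ i)⁻¹ * ((pa ^ (k+1))⁻¹ * pb * pa ^ (k+1)) * pa ^ i := conj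
      _ = (pa ^ (i+k+1))⁻¹ * pb * pa ^ (i+k+1) := by
          rw [pow_add, pow_add, pow_one]; group

lemma fgen_lift : ∀ r ∈ rels, FreeGroup.lift fgen r = 1 := by
  rintro r ⟨i, j, hij, rfl⟩
  simp only [map_mul, map_inv, FreeGroup.lift_apply_of]
  rw [← fgen_rel i j hij]
  group

noncomputable def tau : F →* Equiv.Perm X := PresentedGroup.toGroup fgen_lift

@[simp] lemma tau_x0 : tau (x 0) = pa := PresentedGroup.toGroup.of fgen_lift
@[simp] lemma tau_x1 : tau (x 1) = pb := by
  show tau (PresentedGroup.of 1) = pb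
  rw [show tau (PresentedGroup.of 1) = fgen 1 from PresentedGroup.toGroup.of fgen_lift]
  show (pa ^ 0)⁻¹ * pb * pa ^ 0 = pb
  simp

/-! ### the potential function Ψ -/

noncomputable def run1 (s : X) : ℕ := sInf {k | s k = false}
noncomputable def run0 (s : X) : ℕ := sInf {k | s k = true}

noncomputable def Psi (s : X) : ℤ := if s 0 then (run1 (tailX s) : ℤ) else -(run0 s : ℤ)

def EvF (s : X) : Prop := ∃ N, ∀ k, N ≤ k → s k = false

def Ew (s : X) : Prop := EvF s ∧ s ≠ zeroX

lemma Ew.exists_true {s : X} (h : Ew s) : ∃ k, s k = true := by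
  by_contra hc
  push_neg at hc
  exact h.2 (funext fun k => by simpa [zeroX] using hc k)

lemma Ew.exists_false_tail {s : X} (h : Ew s) : ∃ k, tailX s k = false := by
  obtain ⟨N, hN⟩ := h.1
  exact ⟨N, hN (N + 1) (by omega)⟩

lemma Ew.exists_false {s : X} (h : Ew s) : ∃ k, s k = false := by
  obtain ⟨N, hN⟩ := h.1
  exact ⟨N, hN N le_rfl⟩

lemma sInf_shift {T : ℕ → Prop} (h0 : ¬ T 0) (hne : ∃ k, T (k + 1)) :
    sInf {k | T k} = sInf {k | T (k + 1)} + 1 := by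
  have hne' : {k | T (k+1)}.Nonempty := hne
  have hmem : sInf {k | T (k+1)} ∈ {k | T (k+1)} := Nat.sInf_mem hne'
  apply le_antisymm
  · exact Nat.sInf_le hmem
  · apply le_csInf ⟨sInf {k | T (k + 1)} + 1, hmem⟩
    rintro b hb
    rcases b with _ | b
    · exact absurd hb h0
    · have := Nat.sInf_le (s := {k | T (k+1)}) hb
      omega

lemma run1_cons_false (s : X) : run1 (consX false s) = 0 :=
  Nat.sInf_eq_zero.mpr (Or.inl (by simp [Set.mem_setOf_eq]))

lemma run0_cons_true (s : X) : run0 (consX true s) = 0 :=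
  Nat.sInf_eq_zero.mpr (Or.inl (by simp [Set.mem_setOf_eq]))

lemma run1_cons_true (s : X) (h : ∃ k, s k = false) :
    run1 (consX true s) = run1 s + 1 := by
  unfold run1
  rw [sInf_shift (T := fun k => consX true s k = false) (by simp) (by simpa using h)]
  simp

lemma run0_cons_false (s : X) (h : ∃ k, s k = true) :
    run0 (consX false s) = run0 s + 1 := by
  unfold run0
  rw [sInf_shift (T := fun k => consX false s k = true) (by simp) (by simpa using h)]
  simp

lemma run1_zero (s : X) (h : s 0 = false) : run1 s = 0 :=
  Nat.sInf_eq_zero.mpr (Or.inl h)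

lemma run0_zero (s : X) (h : s 0 = true) : run0 s = 0 :=
  Nat.sInf_eq_zero.mpr (Or.inl h)

lemma run1_true (s : X) (h : s 0 = true) (hf : ∃ k, tailX s k = false) :
    run1 s = run1 (tailX s) + 1 := by
  conv_lhs => rw [← etaX s, h]
  exact run1_cons_true _ hf

@[simp] lemma psi_cons_true (s : X) : Psi (consX true s) = (run1 s : ℤ) := by
  simp [Psi]

@[simp] lemma psi_cons_false (s : X) (h : ∃ k, s k = true) :
    Psi (consX false s) = -(run0 s : ℤ) - 1 := by
  simp [Psi, run0_cons_false s h]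
  ring

/-! ### preservation of `Ew` -/

lemma EvF_cons (b : Bool) (s : X) (h : EvF s) : EvF (consX b s) := by
  obtain ⟨N, hN⟩ := h
  exact ⟨N + 1, fun k hk => by
    rcases k with _ | k
    · omega
    · simpa using hN k (by omega)⟩

lemma EvF_tail (s : X) (h : EvF s) : EvF (tailX s) := by
  obtain ⟨N, hN⟩ := h
  exact ⟨N, fun k hk => by simpa [tailX] using hN (k+1) (by omega)⟩

lemma EvF_aF (s : X) (h : EvF s) : EvF (aF s) := by
  unfold aF
  split <;> [skip; exact EvF_cons _ _ h]
  split
  · exact EvF_tail _ h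
  · exact EvF_cons _ _ (EvF_cons _ _ (EvF_tail _ (EvF_tail _ h)))

lemma EvF_AF (s : X) (h : EvF s) : EvF (AF s) := by
  unfold AF
  split <;> [exact EvF_cons _ _ h; skip]
  split
  · exact EvF_cons _ _ (EvF_cons _ _ (EvF_tail _ (EvF_tail _ h)))
  · exact EvF_tail _ h

lemma EvF_bF (s : X) (h : EvF s) : EvF (bF s) := by
  unfold bF
  split
  · exact EvF_cons _ _ (EvF_aF _ (EvF_tail _ h))
  · exact h

lemma EvF_BF (s : X) (h : EvF s) : EvF (BF s) := by
  unfold BF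
  split
  · exact EvF_cons _ _ (EvF_AF _ (EvF_tail _ h))
  · exact h

@[simp] lemma consX_false_zeroX : consX false zeroX = zeroX := by
  funext n; cases n <;> rfl

lemma aF_zeroX : aF zeroX = zeroX := by
  unfold aF; simp [zeroX]

lemma AF_zeroX : AF zeroX = zeroX := by
  unfold AF; simp [zeroX]
  rfl

lemma bF_zeroX : bF zeroX = zeroX := by unfold bF; simp [zeroX]
lemma BF_zeroX : BF zeroX = zeroX := by unfold BF; simp [zeroX]

lemma Ew_aF (s : X) (h : Ew s) : Ew (aF s) := by
  refine ⟨EvF_aF s h.1, fun hc => h.2 ?_⟩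
  have := congrArg AF hc
  rwa [AF_aF, AF_zeroX] at this

lemma Ew_AF (s : X) (h : Ew s) : Ew (AF s) := by
  refine ⟨EvF_AF s h.1, fun hc => h.2 ?_⟩
  have := congrArg aF hc
  rwa [aF_AF, aF_zeroX] at this

lemma Ew_bF (s : X) (h : Ew s) : Ew (bF s) := by
  refine ⟨EvF_bF s h.1, fun hc => h.2 ?_⟩
  have := congrArg BF hc
  rwa [BF_bF, BF_zeroX] at this

lemma Ew_BF (s : X) (h : Ew s) : Ew (BF s) := by
  refine ⟨EvF_BF s h.1, fun hc => h.2 ?_⟩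
  have := congrArg bF hc
  rwa [bF_BF, bF_zeroX] at this

/-! ### the bad region -/

def Bad (s : X) : Prop := s 0 = false ∨ (s 1 = false ∧ s 2 = false)

/-! ### per-letter behaviour of Ψ -/

lemma psi_aF (s : X) (h : Ew s) : Psi (aF s) = Psi s - 1 := by
  rcases h0 : s 0 with _ | _ <;> rcases h1 : s 1 with _ | _
  · -- 00 : aF s = consX false s
    rw [show aF s = consX false s from by simp [aF, h0]]
    rw [psi_cons_false _ h.exists_true]
    simp [Psi, h0]
  · rw [show aF s = consX false s from by simp [aF, h0]]
    rw [psi_cons_false _ h.exists_true]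
    simp [Psi, h0]
  · -- 10
    rw [show aF s = consX false (consX true (tailX (tailX s))) from by simp [aF, h0, h1]]
    rw [psi_cons_false _ ⟨0, by simp⟩, run0_cons_true]
    have ht : tailX s 0 = false := by simpa [tailX] using h1
    simp [Psi, h0, run1_zero _ ht]
  · -- 11
    rw [show aF s = tailX s from by simp [aF, h0, h1]]
    have ht : tailX s 0 = true := by simpa [tailX] using h1
    have hf : ∃ k, tailX (tailX s) k = false := (Ew.exists_false_tail ⟨EvF_tail _ h.1,
      fun hc => by
        have : tailX s 0 = false := by rw [hc]; rfl
        rw [ht] at this; exact absurd this (by simp)⟩)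
    simp only [Psi, h0, ht, if_true]
    rw [run1_true (tailX s) ht hf]
    push_cast; ring

lemma psi_AF (s : X) (h : Ew s) : Psi (AF s) = Psi s + 1 := by
  rcases h0 : s 0 with _ | _ <;> rcases h1 : s 1 with _ | _
  · -- 00 : AF s = tailX s
    rw [show AF s = tailX s from by simp [AF, h0, h1]]
    have ht : tailX s 0 = false := by simpa [tailX] using h1
    have hex : ∃ k, tailX s k = true := by
      obtain ⟨k, hk⟩ := h.exists_true
      rcases k with _ | k
      · rw [h0] at hk; exact absurd hk (by simp)
      · exact ⟨k, by simpa [tailX] using hk⟩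
    simp only [Psi, h0, ht, Bool.false_eq_true, if_false]
    rw [show run0 s = run0 (tailX s) + 1 from by
      conv_lhs => rw [← etaX s, h0]
      exact run0_cons_false _ hex]
    push_cast; ring
  · -- 01 : AF s = consX true (consX false t2)
    rw [show AF s = consX true (consX false (tailX (tailX s))) from by simp [AF, h0, h1]]
    rw [psi_cons_true, run1_cons_false]
    have : run0 s = 1 := by
      conv_lhs => rw [← etaX s, h0]
      rw [run0_cons_false _ ⟨0, by simpa [tailX] using h1⟩]
      rw [show run0 (tailX s) = 0 from run0_zero _ (by simpa [tailX] using h1)]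
    simp [Psi, h0, this]
  · -- 1* : AF s = consX true s
    rw [show AF s = consX true s from by simp [AF, h0]]
    rw [psi_cons_true, run1_true s h0 h.exists_false_tail]
    simp only [Psi, h0, if_true]
    push_cast; ring
  · rw [show AF s = consX true s from by simp [AF, h0]]
    rw [psi_cons_true, run1_true s h0 h.exists_false_tail]
    simp only [Psi, h0, if_true]
    push_cast; ring

lemma bad_aF (s : X) (h : Bad s) : Bad (aF s) := by
  rcases h0 : s 0 with _ | _
  · rw [show aF s = consX false s from by simp [aF, h0]]
    exact Or.inl (by simp)
  · rcases h with h | ⟨h1, h2⟩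
    · rw [h0] at h; exact absurd h (by simp)
    · rw [show aF s = consX false (consX true (tailX (tailX s))) from by simp [aF, h0, h1]]
      exact Or.inl (by simp)

lemma psi_bF (s : X) (h : Ew s) :
    Psi (bF s) ≤ Psi s ∧ (Psi (bF s) = Psi s → Bad (bF s)) := by
  rcases h0 : s 0 with _ | _
  · rw [bF_false s h0]
    exact ⟨le_rfl, fun _ => Or.inl h0⟩
  · rw [bF_true s h0]
    rw [psi_cons_true]
    have hpsi : Psi s = (run1 (tailX s) : ℤ) := by simp [Psi, h0]
    rcases ht0 : tailX s 0 with _ | _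
    · -- aF (tailX s) = consX false (tailX s) : run1 = 0 = run1 (tailX s), tight, Bad
      have ht0' : s 1 = false := ht0
      rw [show aF (tailX s) = consX false (tailX s) from by simp [aF, ht0']]
      rw [run1_cons_false, hpsi, run1_zero _ ht0]
      refine ⟨le_rfl, fun _ => Or.inr ⟨by simp, by simp [ht0']⟩⟩
    · -- run1 (aF (tailX s)) = run1 (tailX s) - 1 : strict decrease
      have ht0' : s 1 = true := ht0
      have hst : run1 (aF (tailX s)) + 1 = run1 (tailX s) := by
        rcases ht1 : tailX s 1 with _ | _
        · have ht1' : s 2 = false := ht1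
          rw [show aF (tailX s) = consX false (consX true (tailX (tailX (tailX s))))
            from by simp [aF, ht0', ht1']]
          rw [run1_cons_false]
          rw [run1_true (tailX s) ht0 ⟨0, by simpa [tailX] using ht1⟩,
            run1_zero (tailX (tailX s)) (by simpa [tailX] using ht1)]
        · have ht1' : s 2 = true := ht1
          rw [show aF (tailX s) = tailX (tailX s) from by simp [aF, ht0', ht1']]
          have hEt : Ew (tailX s) := ⟨EvF_tail _ h.1, fun hc => by
            have : tailX s 0 = false := by rw [hc]; rfl
            rw [ht0] at this; exact absurd this (by simp)⟩
          rw [← run1_true (tailX s) ht0 hEt.exists_false_tail]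
      constructor
      · rw [hpsi]; omega
      · intro heq; rw [hpsi] at heq; omega

lemma psi_BF (s : X) (h : Ew s) :
    Psi (BF s) ≤ Psi s + 1 ∧ (Psi (BF s) = Psi s + 1 → ¬ Bad s) := by
  rcases h0 : s 0 with _ | _
  · rw [BF_false s h0]
    exact ⟨by omega, fun heq => by omega⟩
  · rw [BF_true s h0, psi_cons_true]
    have hpsi : Psi s = (run1 (tailX s) : ℤ) := by simp [Psi, h0]
    rcases ht0 : tailX s 0 with _ | _
    · have ht0' : s 1 = false := ht0
      rcases ht1 : tailX s 1 with _ | _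
      · -- AF (tailX s) = tailX (tailX s), run1 = 0 both : delta 0
        have ht1' : s 2 = false := ht1
        rw [show AF (tailX s) = tailX (tailX s) from by simp [AF, ht0', ht1']]
        rw [run1_zero (tailX (tailX s)) (by simpa [tailX] using ht1), hpsi,
          run1_zero _ ht0]
        exact ⟨by omega, fun heq => by omega⟩
      · -- AF (tailX s) = consX true (consX false t3) : run1 = 1, run1 (tailX s) = 0; tight, s = 101...
        have ht1' : s 2 = true := ht1
        rw [show AF (tailX s) = consX true (consX false (tailX (tailX (tailX s))))
          from by simp [AF, ht0', ht1']]
        rw [run1_cons_true _ ⟨0, by simp⟩, run1_cons_false, hpsi, run1_zero _ ht0]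
        refine ⟨by omega, fun _ => ?_⟩
        intro hbad
        rcases hbad with hb | ⟨hb1, hb2⟩
        · rw [h0] at hb; exact absurd hb (by simp)
        · have : tailX s 1 = false := by simpa [tailX] using hb2
          rw [ht1] at this; exact absurd this (by simp)
    · -- AF (tailX s) = consX true (tailX s) : +1, tight, s = 11...
      have ht0' : s 1 = true := ht0
      rw [show AF (tailX s) = consX true (tailX s) from by simp [AF, ht0']]
      have hEt : Ew (tailX s) := ⟨EvF_tail _ h.1, fun hc => by
        have : tailX s 0 = false := by rw [hc]; rfl
        rw [ht0] at this; exact absurd this (by simp)⟩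
      rw [run1_cons_true _ hEt.exists_false, hpsi]
      refine ⟨by omega, fun _ => ?_⟩
      intro hbad
      rcases hbad with hb | ⟨hb1, hb2⟩
      · rw [h0] at hb; exact absurd hb (by simp)
      · have : tailX s 0 = false := by simpa [tailX] using hb1
        rw [ht0] at this; exact absurd this (by simp)

/-! ### tags and weights -/

open Classical in
noncomputable def tg (g : F) : ℕ :=
  if g = x 0 then 0 else if g = (x 0)⁻¹ then 1 else if g = x 1 then 2 else 3

lemma tg_le (g : F) : tg g ≤ 3 := by unfold tg; split_ifs <;> omega

lemma tg_eq_zero {g : F} (h : tg g = 0) : g = x 0 := by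
  unfold tg at h; split_ifs at h <;> first | assumption | omega

lemma tg_eq_one {g : F} (h : tg g = 1) : g = (x 0)⁻¹ := by
  unfold tg at h; split_ifs at h <;> first | assumption | omega

lemma tg_eq_two {g : F} (h : tg g = 2) : g = x 1 := by
  unfold tg at h; split_ifs at h <;> first | assumption | omega

lemma tg_eq_three {g : F} (hg : g ∈ gens) (h : tg g = 3) : g = (x 1)⁻¹ := by
  unfold tg at h
  split_ifs at h with h1 h2 h3 <;> try omega
  rcases hg with hg | hg | hg | hg
  · exact absurd hg h1
  · exact absurd hg h2
  · exact absurd hg h3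
  · exact hg

noncomputable def uW (g : F) : ℤ := if tg g = 0 then -1 else if tg g = 2 then 0 else 1

noncomputable def SU (w : List F) : ℤ := (w.map uW).sum

noncomputable def cnt (t : ℕ) (w : List F) : ℤ :=
  (w.map (fun g => if tg g = t then (1:ℤ) else 0)).sum

@[simp] lemma SU_nil : SU [] = 0 := rfl
@[simp] lemma SU_cons (g : F) (w : List F) : SU (g :: w) = uW g + SU w := by
  simp [SU]

@[simp] lemma cnt_nil (t : ℕ) : cnt t [] = 0 := rfl
@[simp] lemma cnt_cons (t : ℕ) (g : F) (w : List F) :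
    cnt t (g :: w) = (if tg g = t then (1:ℤ) else 0) + cnt t w := by
  simp [cnt]

lemma cnt_nonneg (t : ℕ) (w : List F) : 0 ≤ cnt t w := by
  induction w with
  | nil => simp
  | cons g w ih => simp only [cnt_cons]; split_ifs <;> omega

lemma cnt_zero_no {t : ℕ} {w : List F} (h : cnt t w = 0) : ∀ g ∈ w, tg g ≠ t := by
  induction w with
  | nil => simp
  | cons g w ih =>
    have h1 := cnt_nonneg t w
    simp only [cnt_cons] at h
    intro a ha
    rcases List.mem_cons.mp ha with rfl | ha
    · intro hc
      rw [if_pos hc] at h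
      omega
    · refine ih ?_ a ha
      split_ifs at h <;> omega

lemma cnt_pos_ex {t : ℕ} {w : List F} (h : 0 < cnt t w) : ∃ g ∈ w, tg g = t := by
  induction w with
  | nil => simp at h
  | cons g w ih =>
    simp only [cnt_cons] at h
    by_cases hc : tg g = t
    · exact ⟨g, List.mem_cons_self, hc⟩
    · rw [if_neg hc] at h
      obtain ⟨a, ha, h2⟩ := ih (by omega)
      exact ⟨a, List.mem_cons_of_mem _ ha, h2⟩

lemma length_eq_cnt (w : List F) :
    (w.length : ℤ) = cnt 0 w + cnt 1 w + cnt 2 w + cnt 3 w := by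
  induction w with
  | nil => simp
  | cons g w ih =>
    have h3 := tg_le g
    simp only [List.length_cons, cnt_cons, Nat.cast_add, Nat.cast_one]
    interval_cases h : tg g <;> simp_all <;> try ring

lemma SU_eq_cnt (w : List F) : SU w = -(cnt 0 w) + cnt 1 w + cnt 3 w := by
  induction w with
  | nil => simp
  | cons g w ih =>
    have h3 := tg_le g
    simp only [SU_cons, cnt_cons, uW]
    interval_cases h : tg g <;> simp_all <;> try ring

/-! ### abelianization characters -/

noncomputable def eps0 : F →* Multiplicative ℤ :=
  PresentedGroup.toGroup (f := fun i => Multiplicative.ofAdd (if i = 0 then (1:ℤ) else 0))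
    (by
      rintro r ⟨i, j, hij, rfl⟩
      simp only [map_mul, map_inv, FreeGroup.lift_apply_of]
      rw [if_neg (by omega : ¬ j = 0), if_neg (by omega : ¬ j + 1 = 0), ofAdd_zero]
      group)

noncomputable def eps1 : F →* Multiplicative ℤ :=
  PresentedGroup.toGroup (f := fun i => Multiplicative.ofAdd (if i = 0 then (0:ℤ) else 1))
    (by
      rintro r ⟨i, j, hij, rfl⟩
      simp only [map_mul, map_inv, FreeGroup.lift_apply_of]
      rw [if_neg (by omega : ¬ j = 0), if_neg (by omega : ¬ j + 1 = 0)]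
      refine Multiplicative.toAdd.injective ?_
      simp only [toAdd_mul, toAdd_inv, toAdd_ofAdd, toAdd_one]
      ring)

noncomputable def E0 : F → ℤ := fun g => Multiplicative.toAdd (eps0 g)
noncomputable def E1 : F → ℤ := fun g => Multiplicative.toAdd (eps1 g)

@[simp] lemma E0_mul (g h : F) : E0 (g * h) = E0 g + E0 h := by simp [E0, map_mul]
@[simp] lemma E1_mul (g h : F) : E1 (g * h) = E1 g + E1 h := by simp [E1, map_mul]
@[simp] lemma E0_inv (g : F) : E0 g⁻¹ = -E0 g := by simp [E0, map_inv]
@[simp] lemma E1_inv (g : F) : E1 g⁻¹ = -E1 g := by simp [E1, map_inv]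
@[simp] lemma E0_zpow (g : F) (z : ℤ) : E0 (g ^ z) = z * E0 g := by
  simp [E0, map_zpow, toAdd_zpow]
@[simp] lemma E1_zpow (g : F) (z : ℤ) : E1 (g ^ z) = z * E1 g := by
  simp [E1, map_zpow, toAdd_zpow]
@[simp] lemma E0_pow (g : F) (k : ℕ) : E0 (g ^ k) = k * E0 g := by
  simp [E0, map_pow, toAdd_pow]
@[simp] lemma E1_pow (g : F) (k : ℕ) : E1 (g ^ k) = k * E1 g := by
  simp [E1, map_pow, toAdd_pow]
@[simp] lemma E0_x0 : E0 (x 0) = 1 := by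
  show Multiplicative.toAdd (eps0 (PresentedGroup.of 0)) = 1
  rw [eps0, PresentedGroup.toGroup.of]
  simp
@[simp] lemma E0_x1 : E0 (x 1) = 0 := by
  show Multiplicative.toAdd (eps0 (PresentedGroup.of 1)) = 0
  rw [eps0, PresentedGroup.toGroup.of]
  simp
@[simp] lemma E1_x0 : E1 (x 0) = 0 := by
  show Multiplicative.toAdd (eps1 (PresentedGroup.of 0)) = 0
  rw [eps1, PresentedGroup.toGroup.of]
  simp
@[simp] lemma E1_x1 : E1 (x 1) = 1 := by
  show Multiplicative.toAdd (eps1 (PresentedGroup.of 1)) = 1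
  rw [eps1, PresentedGroup.toGroup.of]
  simp

lemma E0_prod_eq (w : List F) (hw : ∀ g ∈ w, g ∈ gens) :
    E0 w.prod = cnt 0 w - cnt 1 w := by
  induction w with
  | nil => simp [E0]
  | cons g w ih =>
    have hg := hw g (List.mem_cons_self)
    have hw' : ∀ a ∈ w, a ∈ gens := fun a ha => hw a (List.mem_cons_of_mem _ ha)
    have h3 := tg_le g
    rw [List.prod_cons, E0_mul, ih hw']
    simp only [cnt_cons]
    interval_cases h : tg g
    · rw [tg_eq_zero h]; simp; try ring
    · rw [tg_eq_one h]; simp; try ring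
    · rw [tg_eq_two h]; simp; try ring
    · rw [tg_eq_three hg h]; simp; try ring

lemma E1_prod_eq (w : List F) (hw : ∀ g ∈ w, g ∈ gens) :
    E1 w.prod = cnt 2 w - cnt 3 w := by
  induction w with
  | nil => simp [E1]
  | cons g w ih =>
    have hg := hw g (List.mem_cons_self)
    have hw' : ∀ a ∈ w, a ∈ gens := fun a ha => hw a (List.mem_cons_of_mem _ ha)
    have h3 := tg_le g
    rw [List.prod_cons, E1_mul, ih hw']
    simp only [cnt_cons]
    interval_cases h : tg g
    · rw [tg_eq_zero h]; simp; try ring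
    · rw [tg_eq_one h]; simp; try ring
    · rw [tg_eq_two h]; simp; try ring
    · rw [tg_eq_three hg h]; simp; try ring

lemma E0_val (n : ℕ) : E0 (x 0 * l n) = n := by
  simp [l]; ring
lemma E1_val (n : ℕ) : E1 (x 0 * l n) = 1 - n := by
  simp [l]; ring

/-! ### trajectories -/

noncomputable def act (w : List F) (s : X) : X := w.foldr (fun g t => tau g t) s

@[simp] lemma act_nil (s : X) : act [] s = s := rfl
@[simp] lemma act_cons (g : F) (w : List F) (s : X) : act (g :: w) s = tau g (act w s) := rfl

lemma act_prod (w : List F) (s : X) : tau w.prod s = act w s := by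
  induction w with
  | nil => simp
  | cons g w ih => rw [List.prod_cons, map_mul, Equiv.Perm.mul_apply, ih, act_cons]

lemma tau_x0_apply (t : X) : tau (x 0) t = aF t := by rw [tau_x0]; rfl
lemma tau_x0_inv_apply (t : X) : tau ((x 0)⁻¹) t = AF t := by rw [map_inv, tau_x0]; rfl
lemma tau_x1_apply (t : X) : tau (x 1) t = bF t := by rw [tau_x1]; rfl
lemma tau_x1_inv_apply (t : X) : tau ((x 1)⁻¹) t = BF t := by rw [map_inv, tau_x1]; rfl

/-- The budget estimate : along any word in the generators, `Ψ` decreases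
by at least minus the weight sum. -/
lemma budget (w : List F) (hw : ∀ g ∈ w, g ∈ gens) (s : X) (hs : Ew s) :
    Ew (act w s) ∧ Psi (act w s) ≤ Psi s + SU w := by
  induction w with
  | nil => simpa using hs
  | cons g w ih =>
    have hg := hw g (List.mem_cons_self)
    have hw' : ∀ a ∈ w, a ∈ gens := fun a ha => hw a (List.mem_cons_of_mem _ ha)
    obtain ⟨hEt, hle⟩ := ih hw'
    have h3 := tg_le g
    rw [act_cons, SU_cons]
    interval_cases h : tg g
    · have hu : uW g = -1 := by simp [uW, h]
      obtain rfl := tg_eq_zero h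
      rw [hu, tau_x0_apply]
      refine ⟨Ew_aF _ hEt, ?_⟩
      rw [psi_aF _ hEt]; linarith
    · have hu : uW g = 1 := by simp [uW, h]
      obtain rfl := tg_eq_one h
      rw [hu, tau_x0_inv_apply]
      refine ⟨Ew_AF _ hEt, ?_⟩
      rw [psi_AF _ hEt]; linarith
    · have hu : uW g = 0 := by simp [uW, h]
      obtain rfl := tg_eq_two h
      rw [hu, tau_x1_apply]
      refine ⟨Ew_bF _ hEt, ?_⟩
      have := (psi_bF _ hEt).1
      linarith
    · have hu : uW g = 1 := by simp [uW, h]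
      obtain rfl := tg_eq_three hg h
      rw [hu, tau_x1_inv_apply]
      refine ⟨Ew_BF _ hEt, ?_⟩
      have := (psi_BF _ hEt).1
      linarith

/-- In the tight case with no `x₀⁻¹` letters, the trajectory gets trapped in
the bad region as soon as an `x₁` letter is used. -/
lemma tight_trap (w : List F) (hw : ∀ g ∈ w, g ∈ gens) (hno : ∀ g ∈ w, tg g ≠ 1)
    (s : X) (hs : Ew s) (ht : Psi (act w s) = Psi s + SU w) :
    (Bad s → Bad (act w s)) ∧ ((∃ g ∈ w, tg g = 2) → Bad (act w s)) := by
  induction w with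
  | nil => exact ⟨fun h => by simpa using h, by rintro ⟨g, hg, _⟩; simp at hg⟩
  | cons g w ih =>
    have hg := hw g (List.mem_cons_self)
    have hw' : ∀ a ∈ w, a ∈ gens := fun a ha => hw a (List.mem_cons_of_mem _ ha)
    have hno' : ∀ a ∈ w, tg a ≠ 1 := fun a ha => hno a (List.mem_cons_of_mem _ ha)
    obtain ⟨hEt, hle⟩ := budget w hw' s hs
    have h3 := tg_le g
    rw [act_cons, SU_cons] at ht
    interval_cases h : tg g
    · -- x₀ step
      have hu : uW g = -1 := by simp [uW, h]
      obtain rfl := tg_eq_zero h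
      rw [hu, tau_x0_apply, psi_aF _ hEt] at ht
      have htw : Psi (act w s) = Psi s + SU w := by linarith
      obtain ⟨ih1, ih2⟩ := ih hw' hno' htw
      rw [act_cons, tau_x0_apply]
      constructor
      · exact fun hb => bad_aF _ (ih1 hb)
      · rintro ⟨a, ha, hta⟩
        rcases List.mem_cons.mp ha with rfl | ha
        · omega
        · exact bad_aF _ (ih2 ⟨a, ha, hta⟩)
    · exact absurd h (hno g (List.mem_cons_self))
    · -- x₁ step: lands in Bad
      have hu : uW g = 0 := by simp [uW, h]
      obtain rfl := tg_eq_two h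
      rw [hu, tau_x1_apply] at ht
      have hb1 := (psi_bF _ hEt).1
      have hstep : Psi (bF (act w s)) = Psi (act w s) := by linarith
      have hbad := (psi_bF _ hEt).2 hstep
      rw [act_cons, tau_x1_apply]
      exact ⟨fun _ => hbad, fun _ => hbad⟩
    · -- x₁⁻¹ step: tight forces the current point to be good
      have hu : uW g = 1 := by simp [uW, h]
      obtain rfl := tg_eq_three hg h
      rw [hu, tau_x1_inv_apply] at ht
      have hb1 := (psi_BF _ hEt).1
      have htw : Psi (act w s) = Psi s + SU w := by linarith
      have hstep : Psi (BF (act w s)) = Psi (act w s) + 1 := by linarith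
      have hgood := (psi_BF _ hEt).2 hstep
      obtain ⟨ih1, ih2⟩ := ih hw' hno' htw
      rw [act_cons, tau_x1_inv_apply]
      constructor
      · exact fun hb => absurd (ih1 hb) hgood
      · rintro ⟨a, ha, hta⟩
        rcases List.mem_cons.mp ha with rfl | ha
        · omega
        · exact absurd (ih2 ⟨a, ha, hta⟩) hgood

/-! ### the fixed point -/

def ones (k : ℕ) : X := iterConsX k zeroX

lemma ones_succ (k : ℕ) : ones (k + 1) = consX true (ones k) := rfl

lemma ones_zero' (k : ℕ) : ones (k+1) 0 = true := rfl

lemma Ew_ones (k : ℕ) : Ew (ones (k + 1)) := by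
  constructor
  · refine ⟨k + 1, fun m hm => ?_⟩
    induction k generalizing m with
    | zero =>
      rcases m with _ | m
      · omega
      · rfl
    | succ k ih =>
      rcases m with _ | m
      · omega
      · exact ih m (by omega)
  · intro hc
    have := congrFun hc 0
    simp [ones_zero', zeroX] at this

lemma not_bad_ones2 : ¬ Bad (ones 2) := by
  rintro (h | ⟨h1, h2⟩)
  · exact absurd h (by rw [ones_zero']; simp)
  · rw [show ones 2 1 = true from rfl] at h1
    exact absurd h1 (by simp)

lemma BF_ones (k : ℕ) (hk : 1 ≤ k) : BF (ones (k + 1)) = ones (k + 2) := by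
  rw [BF_true _ (ones_zero' k), ones_succ, tailX_consX]
  rw [show AF (ones k) = iterConsX (k+1) zeroX from AF_iterConsX k zeroX hk]
  rfl

lemma BF_iter (m : ℕ) : BF^[m] (ones 2) = ones (m + 2) := by
  induction m with
  | zero => rfl
  | succ m ih =>
    rw [Function.iterate_succ_apply', ih, BF_ones (m+1) (by omega)]

lemma aF_iter (m : ℕ) : aF^[m] (ones (m + 1)) = ones 1 := by
  induction m with
  | zero => rfl
  | succ m ih =>
    rw [Function.iterate_succ_apply,
      show aF (ones (m + 1 + 1)) = ones (m + 1) from aF_iterConsX (m+1) zeroX (by omega), ih]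

lemma bF_ones1 : bF (ones 1) = ones 1 := by
  rw [bF_true _ (ones_zero' 0), ones_succ, tailX_consX]
  show consX true (aF zeroX) = _
  rw [aF_zeroX]
  rfl

lemma AF_ones1 : AF (ones 1) = ones 2 := by
  rw [AF_true _ (ones_zero' 0)]
  rfl

lemma pb_inv_pow_apply (k : ℕ) (s : X) : ((pb⁻¹) ^ k) s = BF^[k] s := by
  induction k generalizing s with
  | zero => simp
  | succ k ih =>
    rw [pow_succ, Equiv.Perm.mul_apply, Function.iterate_succ_apply, ih]
    rfl

lemma x0_l_eq (n : ℕ) : x 0 * l n = (x 0)⁻¹ * (x 1 * (x 0 ^ (n+1) * ((x 1)⁻¹) ^ n)) := by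
  have h1 : (x 0 : F) ^ ((n : ℤ) + 1) = x 0 ^ (n + 1) := by
    rw [← zpow_natCast]
    norm_cast
  have h2 : (x 1 : F) ^ (-(n : ℤ)) = ((x 1)⁻¹) ^ n := by
    rw [zpow_neg, zpow_natCast, inv_pow]
  unfold l
  rw [h1, h2]
  group

lemma tau_fix (n : ℕ) : tau (x 0 * l n) (ones 2) = ones 2 := by
  rw [x0_l_eq]
  rw [map_mul, map_mul, map_mul, map_inv, map_pow, map_pow, map_inv, tau_x0, tau_x1]
  simp only [Equiv.Perm.mul_apply]
  rw [pb_inv_pow_apply, BF_iter, pa_pow_apply, aF_iter (n+1)]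
  rw [show pb (ones 1) = bF (ones 1) from rfl, bF_ones1]
  rw [show pa⁻¹ (ones 1) = AF (ones 1) from rfl, AF_ones1]

/-! ### the lower bound -/

lemma lower_bound (n : ℕ) (w : List F) (hw : ∀ g ∈ w, g ∈ gens)
    (hp : w.prod = x 0 * l n) : 2 * n + 3 ≤ w.length := by
  by_contra hcon
  push_neg at hcon
  have hEp : Ew (ones 2) := Ew_ones 1
  have hact : act w (ones 2) = ones 2 := by rw [← act_prod, hp, tau_fix]
  obtain ⟨hEend, hle⟩ := budget w hw _ hEp
  rw [hact] at hle
  have h0le : 0 ≤ SU w := by linarith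
  have hc0 := E0_prod_eq w hw
  have hc1 := E1_prod_eq w hw
  rw [hp, E0_val] at hc0
  rw [hp, E1_val] at hc1
  have hlen := length_eq_cnt w
  have hsu := SU_eq_cnt w
  have hn0 := cnt_nonneg 0 w
  have hn1 := cnt_nonneg 1 w
  have hn2 := cnt_nonneg 2 w
  have hn3 := cnt_nonneg 3 w
  have hwlen : (w.length : ℤ) ≤ 2 * n + 2 := by exact_mod_cast Nat.lt_succ_iff.mp hcon
  have hc1z : cnt 1 w = 0 := by omega
  have hc2o : cnt 2 w = 1 := by omega
  have hsu0 : SU w = 0 := by omega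
  have hno : ∀ g ∈ w, tg g ≠ 1 := cnt_zero_no hc1z
  have hex : ∃ g ∈ w, tg g = 2 := cnt_pos_ex (by omega)
  have htight : Psi (act w (ones 2)) = Psi (ones 2) + SU w := by
    rw [hact, hsu0]; ring
  have hbad := (tight_trap w hw hno _ hEp htight).2 hex
  rw [hact] at hbad
  exact not_bad_ones2 hbad

/-! ### the upper bound -/

noncomputable def gword (n : ℕ) : List F :=
  (x 0)⁻¹ :: x 1 :: (List.replicate (n+1) (x 0) ++ List.replicate n ((x 1)⁻¹))

lemma gword_length (n : ℕ) : (gword n).length = 2 * n + 3 := by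
  simp [gword]; omega

lemma gword_mem (n : ℕ) : ∀ a ∈ gword n, a ∈ gens := by
  intro a ha
  simp only [gword, List.mem_cons, List.mem_append, List.mem_replicate] at ha
  rcases ha with rfl | rfl | ⟨-, rfl⟩ | ⟨-, rfl⟩
  · exact Or.inr (Or.inl rfl)
  · exact Or.inr (Or.inr (Or.inl rfl))
  · exact Or.inl rfl
  · exact Or.inr (Or.inr (Or.inr rfl))

lemma gword_prod (n : ℕ) : (gword n).prod = x 0 * l n := by
  rw [x0_l_eq]
  simp [gword, List.prod_cons, List.prod_append, List.prod_replicate]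

lemma len_eq (n : ℕ) : len (x 0 * l n) = 2 * n + 3 := by
  have hmem : (2 * n + 3) ∈
      {m | ∃ w : List F, w.length = m ∧ (∀ a ∈ w, a ∈ gens) ∧ w.prod = x 0 * l n} :=
    ⟨gword n, gword_length n, gword_mem n, gword_prod n⟩
  unfold len
  apply le_antisymm
  · exact Nat.sInf_le hmem
  · apply le_csInf ⟨2 * n + 3, hmem⟩
    rintro m ⟨w, rfl, hmem', hprod⟩
    exact lower_bound n w hmem' hprod

/-- For `n ≥ 1`, `ℓ(x₀ l) = 2n + 3`; consequently the two-step path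
`l → x₀ l → x₀² l = r` leaves the ball `B_{2n+2}`. -/
theorem length_x0_l :
    ∀ n : ℕ, 1 ≤ n →
      len (x 0 * l n) = 2 * n + 3 ∧
      ¬ IsPathIn (2 * n + 2) (l n) (r n) 2 (fun k => x 0 ^ k * l n) := by
  intro n hn
  refine ⟨len_eq n, ?_⟩
  rintro ⟨-, -, -, hball⟩
  have h1 := hball 1 (by omega)
  simp only [pow_one] at h1
  rw [len_eq n] at h1
  omega

end ThompsonF
end

section
/- For every integer n ≥ 1, with l := x_0^{-2} x_1 x_0^{n+1} x_1^{-n} and r := x_0^2 l in Thompson's group F, there exists a path from l to r of length 4n + 4 lying inside the ball B_{2n+2}; one such path is given by successively left-multiplying l by the letters of the word (x_1 x_0^{n+1})(x_1^{-1} x_0^{-n})(x_1^{-1} x_0^{n})(x_1 x_0^{1-n}), read from right to left. -/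
namespace ThompsonF

/-- The word `(x₁ x₀^{n+1})(x₁⁻¹ x₀⁻ⁿ)(x₁⁻¹ x₀ⁿ)(x₁ x₀^{1-n})`,
listed in right-to-left (application) order. -/
noncomputable def word4 (n : ℕ) : List F :=
  List.replicate (n - 1) (x 0)⁻¹ ++ [x 1] ++ List.replicate n (x 0) ++ [(x 1)⁻¹] ++
    List.replicate n (x 0)⁻¹ ++ [(x 1)⁻¹] ++ List.replicate (n + 1) (x 0) ++ [x 1]

-- ===== relations =====
lemma relF {i j : ℕ} (h : i < j) : x j * x i = x i * x (j + 1) := by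
  have hr : ((FreeGroup.of i)⁻¹ * FreeGroup.of j * FreeGroup.of i * (FreeGroup.of (j + 1))⁻¹ : FreeGroup ℕ) ∈ rels := ⟨i, j, h, rfl⟩
  have h1 : (PresentedGroup.mk rels) ((FreeGroup.of i)⁻¹ * FreeGroup.of j * FreeGroup.of i * (FreeGroup.of (j + 1))⁻¹) = 1 := by
    apply (QuotientGroup.eq_one_iff _).2
    exact Subgroup.subset_normalClosure hr
  simp only [map_mul, map_inv] at h1
  have h1' : (x i)⁻¹ * x j * x i * (x (j+1))⁻¹ = 1 := h1
  calc x j * x i = x i * ((x i)⁻¹ * x j * x i * (x (j+1))⁻¹) * x (j+1) := by group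
    _ = x i * x (j + 1) := by rw [h1']; group

lemma lemA (j : ℕ) (hj : 1 ≤ j) : ∀ k : ℕ, x j * x 0 ^ k = x 0 ^ k * x (j + k)
  | 0 => by simp
  | (k+1) => by
    have h0 : (0:ℕ) < j + k := by omega
    calc x j * x 0 ^ (k+1) = (x j * x 0 ^ k) * x 0 := by rw [pow_succ]; group
      _ = x 0 ^ k * (x (j+k) * x 0) := by rw [lemA j hj k]; group
      _ = x 0 ^ k * (x 0 * x (j+k+1)) := by rw [relF h0]
      _ = x 0 ^ (k+1) * x (j + (k+1)) := by rw [pow_succ]; ring_nf; group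

lemma lemB (j : ℕ) (hj : 2 ≤ j) : ∀ k : ℕ, x j * x 1 ^ k = x 1 ^ k * x (j + k)
  | 0 => by simp
  | (k+1) => by
    have h0 : (1:ℕ) < j + k := by omega
    calc x j * x 1 ^ (k+1) = (x j * x 1 ^ k) * x 1 := by rw [pow_succ]; group
      _ = x 1 ^ k * (x (j+k) * x 1) := by rw [lemB j hj k]; group
      _ = x 1 ^ k * (x 1 * x (j+k+1)) := by rw [relF h0]
      _ = x 1 ^ (k+1) * x (j + (k+1)) := by rw [pow_succ]; ring_nf; group

lemma hx2 : x 2 = (x 0)⁻¹ * (x 1 * x 0) := by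
  rw [relF (show (0:ℕ) < 1 by omega)]; group

lemma hconj (k : ℕ) : x (k + 2) = (x 1 ^ k)⁻¹ * x 2 * x 1 ^ k := by
  have h := lemB 2 le_rfl k
  rw [Nat.add_comm 2 k] at h
  rw [mul_assoc, h]; group

lemma hconj' (k : ℕ) : x (k + 2) * (x 1 ^ k)⁻¹ = (x 1 ^ k)⁻¹ * x 2 := by
  rw [hconj k]; group

lemma l_eq (m : ℕ) : l (m+1)
    = (x 0)⁻¹ * (x 0)⁻¹ * x 1 * x 0 ^ (m+2) * ((x 1)⁻¹) ^ (m+1) := by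
  unfold l
  have h1 : (((m+1:ℕ)):ℤ) + 1 = ((m+2:ℕ):ℤ) := by push_cast; ring
  rw [h1]
  simp only [zpow_neg, zpow_natCast]
  group

lemma I1 (m : ℕ) : l (m+1)
    = x 0 ^ m * ((x 1)⁻¹) ^ (m+1) * (x 0)⁻¹ * x 1 * x 0 := by
  rw [l_eq]
  have e1 : x 1 * x 0 ^ (m+2) = x 0 ^ (m+2) * x (m+3) := by
    have := lemA 1 le_rfl (m+2); rw [show 1 + (m+2) = m+3 by omega] at this; exact this
  have e2 : x (m+3) * (x 1 ^ (m+1))⁻¹ = (x 1 ^ (m+1))⁻¹ * x 2 := by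
    have := hconj' (m+1); rw [show m+1+2 = m+3 by omega] at this; exact this
  calc (x 0)⁻¹ * (x 0)⁻¹ * x 1 * x 0 ^ (m+2) * ((x 1)⁻¹) ^ (m+1)
      = (x 0)⁻¹ * (x 0)⁻¹ * (x 1 * x 0 ^ (m+2)) * (x 1 ^ (m+1))⁻¹ := by group
    _ = (x 0)⁻¹ * (x 0)⁻¹ * (x 0 ^ (m+2) * x (m+3)) * (x 1 ^ (m+1))⁻¹ := by rw [e1]
    _ = (x 0)⁻¹ * (x 0)⁻¹ * x 0 ^ (m+2) * (x (m+3) * (x 1 ^ (m+1))⁻¹) := by group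
    _ = (x 0)⁻¹ * (x 0)⁻¹ * x 0 ^ (m+2) * ((x 1 ^ (m+1))⁻¹ * ((x 0)⁻¹ * (x 1 * x 0))) := by
        rw [e2, hx2]
    _ = x 0 ^ m * ((x 1)⁻¹) ^ (m+1) * (x 0)⁻¹ * x 1 * x 0 := by
        rw [show m + 2 = m + 1 + 1 by omega, pow_succ, pow_succ]; group

lemma I2 (m : ℕ) :
    (x 1)⁻¹ * x 0 ^ (m+1) * ((x 1)⁻¹) ^ m * (x 0)⁻¹ * x 1 * x 0
      = x 0 ^ (m+1) * ((x 1)⁻¹) ^ m := by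
  have e1 : x 1 * x 0 ^ (m+1) = x 0 ^ (m+1) * x (m+2) := by
    have := lemA 1 le_rfl (m+1); rw [show 1 + (m+1) = m+2 by omega] at this; exact this
  calc (x 1)⁻¹ * x 0 ^ (m+1) * ((x 1)⁻¹) ^ m * (x 0)⁻¹ * x 1 * x 0
      = (x 1)⁻¹ * x 0 ^ (m+1) * ((x 1 ^ m)⁻¹ * ((x 0)⁻¹ * (x 1 * x 0))) := by group
    _ = (x 1)⁻¹ * x 0 ^ (m+1) * (x (m+2) * (x 1 ^ m)⁻¹) := by rw [← hx2, ← hconj']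
    _ = (x 1)⁻¹ * (x 0 ^ (m+1) * x (m+2)) * (x 1 ^ m)⁻¹ := by group
    _ = (x 1)⁻¹ * (x 1 * x 0 ^ (m+1)) * (x 1 ^ m)⁻¹ := by rw [← e1]
    _ = x 0 ^ (m+1) * ((x 1)⁻¹) ^ m := by group

-- ===== word length machinery =====
lemma len_le_of_word (g : F) (w : List F) (hw : ∀ a ∈ w, a ∈ gens) (hp : w.prod = g) :
    len g ≤ w.length :=
  Nat.sInf_le ⟨w, rfl, hw, hp⟩

lemma inv_pow_mul_pow (g : F) {j mm : ℕ} (h : j ≤ mm) : (g⁻¹) ^ j * g ^ mm = g ^ (mm - j) := by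
  obtain ⟨d, rfl⟩ := Nat.exists_eq_add_of_le h
  rw [show j + d - j = d by omega, pow_add]
  group

-- ===== list helpers =====
lemma revprod_take0 (g : F) (p : ℕ) (v : List F) {j : ℕ} (hj : j ≤ p) :
    (((List.replicate p g ++ v).take j).reverse).prod = g ^ j := by
  rw [List.take_append_of_le_length (by simpa using hj), List.take_replicate,
    min_eq_left hj, List.reverse_replicate, List.prod_replicate]

lemma revprod_take (u : List F) (g : F) (p : ℕ) (v : List F) {j k : ℕ} (hj : j ≤ p)
    (hk : k = u.length + j) :
    (((u ++ (List.replicate p g ++ v)).take k).reverse).prod = g ^ j * (u.reverse).prod := by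
  subst hk
  rw [List.take_append, List.reverse_append, List.prod_append,
    List.take_append_of_le_length (by simpa using hj), List.take_replicate,
    Nat.add_sub_cancel_left, min_eq_left hj, List.reverse_replicate, List.prod_replicate,
    List.take_of_length_le (Nat.le_add_right _ _)]


-- ===== splitting word4 =====
lemma hsplit1 (m : ℕ) : word4 (m+1) = List.replicate m (x 0)⁻¹ ++
    ([x 1] ++ (List.replicate (m+1) (x 0) ++ ([(x 1)⁻¹] ++ (List.replicate (m+1) (x 0)⁻¹ ++
      ([(x 1)⁻¹] ++ (List.replicate (m+2) (x 0) ++ [x 1])))))) := by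
  simp [word4]

lemma hsplit2 (m : ℕ) : word4 (m+1) = (List.replicate m (x 0)⁻¹ ++ [x 1]) ++
    (List.replicate (m+1) (x 0) ++ ([(x 1)⁻¹] ++ (List.replicate (m+1) (x 0)⁻¹ ++
      ([(x 1)⁻¹] ++ (List.replicate (m+2) (x 0) ++ [x 1]))))) := by
  simp [word4, List.append_assoc]

lemma hsplit3 (m : ℕ) : word4 (m+1) = (List.replicate m (x 0)⁻¹ ++ [x 1] ++
    List.replicate (m+1) (x 0) ++ [(x 1)⁻¹]) ++ (List.replicate (m+1) (x 0)⁻¹ ++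
      ([(x 1)⁻¹] ++ (List.replicate (m+2) (x 0) ++ [x 1]))) := by
  simp [word4, List.append_assoc]

lemma hsplit4 (m : ℕ) : word4 (m+1) = (List.replicate m (x 0)⁻¹ ++ [x 1] ++
    List.replicate (m+1) (x 0) ++ [(x 1)⁻¹] ++ List.replicate (m+1) (x 0)⁻¹ ++ [(x 1)⁻¹]) ++
    (List.replicate (m+2) (x 0) ++ [x 1]) := by
  simp [word4, List.append_assoc]

-- ===== segment closed forms =====
lemma seg1 (m : ℕ) {j : ℕ} (hj : j ≤ m) :
    ((word4 (m+1)).take j).reverse.prod * l (m+1)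
      = x 0 ^ (m - j) * ((x 1)⁻¹) ^ (m+1) * (x 0)⁻¹ * x 1 * x 0 := by
  rw [hsplit1, revprod_take0 _ _ _ hj, I1, ← inv_pow_mul_pow (x 0) hj]
  group

lemma seg2 (m : ℕ) {j : ℕ} (hj : j ≤ m+1) :
    ((word4 (m+1)).take (m+1+j)).reverse.prod * l (m+1)
      = x 0 ^ j * ((x 1)⁻¹) ^ m * (x 0)⁻¹ * x 1 * x 0 := by
  rw [hsplit2, revprod_take _ _ _ _ hj (by simp), I1]
  simp only [List.reverse_append, List.reverse_replicate, List.reverse_cons, List.reverse_nil,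
    List.prod_append, List.prod_cons, List.prod_nil, List.prod_replicate, List.nil_append, one_mul, mul_one]
  group

lemma seg3key (m : ℕ) :
    ((List.replicate m (x 0)⁻¹ ++ [x 1] ++ List.replicate (m+1) (x 0) ++
        [(x 1)⁻¹]).reverse).prod * l (m+1)
      = x 0 ^ (m+1) * ((x 1)⁻¹) ^ m := by
  rw [← I2 m, I1]
  simp only [List.reverse_append, List.reverse_replicate, List.reverse_cons, List.reverse_nil,
    List.prod_append, List.prod_cons, List.prod_nil, List.prod_replicate, List.nil_append, one_mul, mul_one]
  group

lemma seg3 (m : ℕ) {j : ℕ} (hj : j ≤ m+1) :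
    ((word4 (m+1)).take (2*m+3+j)).reverse.prod * l (m+1)
      = x 0 ^ (m+1-j) * ((x 1)⁻¹) ^ m := by
  rw [hsplit3, revprod_take _ _ _ _ hj (by simp; omega), mul_assoc, seg3key,
    ← inv_pow_mul_pow (x 0) hj]
  group

lemma seg4key (m : ℕ) :
    ((List.replicate m (x 0)⁻¹ ++ [x 1] ++ List.replicate (m+1) (x 0) ++ [(x 1)⁻¹] ++
        List.replicate (m+1) (x 0)⁻¹ ++ [(x 1)⁻¹]).reverse).prod * l (m+1)
      = ((x 1)⁻¹) ^ (m+1) := by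
  have h3 := seg3key m
  calc ((List.replicate m (x 0)⁻¹ ++ [x 1] ++ List.replicate (m+1) (x 0) ++ [(x 1)⁻¹] ++
        List.replicate (m+1) (x 0)⁻¹ ++ [(x 1)⁻¹]).reverse).prod * l (m+1)
      = (x 1)⁻¹ * ((x 0)⁻¹) ^ (m+1) *
          (((List.replicate m (x 0)⁻¹ ++ [x 1] ++ List.replicate (m+1) (x 0) ++
            [(x 1)⁻¹]).reverse).prod * l (m+1)) := by
        simp only [List.reverse_append, List.reverse_replicate, List.reverse_cons,
          List.reverse_nil, List.prod_append, List.prod_cons, List.prod_nil, List.prod_replicate, List.nil_append,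
          one_mul, mul_one]
        group
    _ = (x 1)⁻¹ * ((x 0)⁻¹) ^ (m+1) * (x 0 ^ (m+1) * ((x 1)⁻¹) ^ m) := by rw [h3]
    _ = ((x 1)⁻¹) ^ (m+1) := by group

lemma seg4 (m : ℕ) {j : ℕ} (hj : j ≤ m+2) :
    ((word4 (m+1)).take (3*m+5+j)).reverse.prod * l (m+1)
      = x 0 ^ j * ((x 1)⁻¹) ^ (m+1) := by
  rw [hsplit4, revprod_take _ _ _ _ hj (by simp; omega), mul_assoc, seg4key]

lemma len_word4 (m : ℕ) : (word4 (m+1)).length = 4*(m+1)+4 := by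
  simp [word4]; omega

lemma seg5 (m : ℕ) :
    ((word4 (m+1)).take (4*m+8)).reverse.prod * l (m+1)
      = x 1 * x 0 ^ (m+2) * ((x 1)⁻¹) ^ (m+1) := by
  have hfull : (word4 (m+1)).take (4*m+8) = word4 (m+1) :=
    List.take_of_length_le (by rw [len_word4]; omega)
  rw [hfull, hsplit4]
  have h4 := seg4key m
  calc ((List.replicate m (x 0)⁻¹ ++ [x 1] ++ List.replicate (m+1) (x 0) ++ [(x 1)⁻¹] ++
        List.replicate (m+1) (x 0)⁻¹ ++ [(x 1)⁻¹]) ++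
        (List.replicate (m+2) (x 0) ++ [x 1])).reverse.prod * l (m+1)
      = x 1 * x 0 ^ (m+2) *
          (((List.replicate m (x 0)⁻¹ ++ [x 1] ++ List.replicate (m+1) (x 0) ++ [(x 1)⁻¹] ++
            List.replicate (m+1) (x 0)⁻¹ ++ [(x 1)⁻¹]).reverse).prod * l (m+1)) := by
        simp only [List.reverse_append, List.reverse_replicate, List.reverse_cons,
          List.reverse_nil, List.prod_append, List.prod_cons, List.prod_nil, List.prod_replicate, List.nil_append,
          one_mul, mul_one]
        group
    _ = x 1 * x 0 ^ (m+2) * ((x 1)⁻¹) ^ (m+1) := by rw [h4]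

lemma r_eq (m : ℕ) : r (m+1) = x 1 * x 0 ^ (m+2) * ((x 1)⁻¹) ^ (m+1) := by
  rw [r, l_eq]; group

lemma mem_word4 (m : ℕ) : ∀ g ∈ word4 (m+1), g ∈ gens := by
  intro g hg
  simp only [word4, List.mem_append, List.mem_replicate, List.mem_singleton] at hg
  simp only [gens, Set.mem_insert_iff, Set.mem_singleton_iff]
  tauto



/-- For `n ≥ 1` there is a path from `l` to `r` of length `4n + 4` inside `B_{2n+2}`;
one such path is obtained by successively left-multiplying `l` by the letters of
`(x₁ x₀^{n+1})(x₁⁻¹ x₀⁻ⁿ)(x₁⁻¹ x₀ⁿ)(x₁ x₀^{1-n})`, read from right to left. -/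
theorem path_of_length_4n4 :
    ∀ n : ℕ, 1 ≤ n →
      (∃ c : ℕ → F, IsPathIn (2 * n + 2) (l n) (r n) (4 * n + 4) c) ∧
      IsPathIn (2 * n + 2) (l n) (r n) (4 * n + 4)
        (fun k => ((word4 n).take k).reverse.prod * l n) := by
  intro n hn
  obtain ⟨m, rfl⟩ : ∃ m, n = m + 1 := ⟨n - 1, by omega⟩
  have hmem : ∀ (p q : ℕ) (t : List F),
      (∀ g ∈ t, g ∈ gens) →
      ∀ g ∈ List.replicate p (x 0) ++ (List.replicate q (x 1)⁻¹ ++ t), g ∈ gens := by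
    intro p q t ht g hg
    simp only [List.mem_append, List.mem_replicate] at hg
    rcases hg with ⟨-, rfl⟩ | ⟨-, rfl⟩ | hg
    · simp [gens]
    · simp [gens]
    · exact ht g hg
  have htail : ∀ g ∈ ([(x 0)⁻¹, x 1, x 0] : List F), g ∈ gens := by
    intro g hg
    simp only [List.mem_cons, List.not_mem_nil, or_false] at hg
    rcases hg with rfl | rfl | rfl <;> simp [gens]
  have hnil : ∀ g ∈ ([] : List F), g ∈ gens := by simp
  have hpath : IsPathIn (2 * (m+1) + 2) (l (m+1)) (r (m+1)) (4 * (m+1) + 4)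
      (fun k => ((word4 (m+1)).take k).reverse.prod * l (m+1)) := by
    refine ⟨by simp, ?_, ?_, ?_⟩
    · show ((word4 (m+1)).take (4*(m+1)+4)).reverse.prod * l (m+1) = r (m+1)
      rw [show 4*(m+1)+4 = 4*m+8 by ring, seg5, r_eq]
    · intro k hk
      have hk' : k < (word4 (m+1)).length := by rw [len_word4]; omega
      show (((word4 (m+1)).take (k+1)).reverse.prod * l (m+1)) *
          (((word4 (m+1)).take k).reverse.prod * l (m+1))⁻¹ ∈ gens
      have hsucc : (word4 (m+1)).take (k+1)
          = (word4 (m+1)).take k ++ [(word4 (m+1))[k]] := by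
        rw [List.take_succ, List.getElem?_eq_getElem hk']; rfl
      have heq : (((word4 (m+1)).take (k+1)).reverse.prod * l (m+1)) *
          (((word4 (m+1)).take k).reverse.prod * l (m+1))⁻¹ = (word4 (m+1))[k] := by
        rw [hsucc]
        simp only [List.reverse_append, List.reverse_cons, List.reverse_nil, List.nil_append,
          List.prod_append, List.prod_cons, List.prod_nil, one_mul, mul_one,
          List.singleton_append]
        group
      rw [heq]
      exact mem_word4 m _ (List.getElem_mem hk')
    · intro k hk
      show len (((word4 (m+1)).take k).reverse.prod * l (m+1)) ≤ 2*(m+1)+2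
      have hcase : k ≤ m ∨ (m+1 ≤ k ∧ k ≤ 2*m+2) ∨ (2*m+3 ≤ k ∧ k ≤ 3*m+4) ∨
          (3*m+5 ≤ k ∧ k ≤ 4*m+7) ∨ k = 4*m+8 := by omega
      rcases hcase with h1 | h2 | h3 | h4 | h5
      · rw [seg1 m h1]
        refine le_trans (len_le_of_word _
          (List.replicate (m-k) (x 0) ++ (List.replicate (m+1) (x 1)⁻¹ ++ [(x 0)⁻¹, x 1, x 0]))
          (hmem _ _ _ htail) ?_) ?_
        · simp only [List.prod_append, List.prod_replicate, List.prod_cons, List.prod_nil,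
            mul_one]
          group
        · simp only [List.length_append, List.length_replicate, List.length_cons,
            List.length_nil]
          omega
      · obtain ⟨j, hj, rfl⟩ : ∃ j, j ≤ m+1 ∧ k = m+1+j := ⟨k-(m+1), by omega, by omega⟩
        rw [seg2 m hj]
        refine le_trans (len_le_of_word _
          (List.replicate j (x 0) ++ (List.replicate m (x 1)⁻¹ ++ [(x 0)⁻¹, x 1, x 0]))
          (hmem _ _ _ htail) ?_) ?_
        · simp only [List.prod_append, List.prod_replicate, List.prod_cons, List.prod_nil,
            mul_one]
          group
        · simp only [List.length_append, List.length_replicate, List.length_cons,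
            List.length_nil]
          omega
      · obtain ⟨j, hj, rfl⟩ : ∃ j, j ≤ m+1 ∧ k = 2*m+3+j := ⟨k-(2*m+3), by omega, by omega⟩
        rw [seg3 m hj]
        refine le_trans (len_le_of_word _
          (List.replicate (m+1-j) (x 0) ++ (List.replicate m (x 1)⁻¹ ++ []))
          (hmem _ _ _ hnil) ?_) ?_
        · simp only [List.prod_append, List.prod_replicate, List.prod_nil, mul_one]
        · simp only [List.length_append, List.length_replicate, List.length_nil]
          omega
      · obtain ⟨j, hj, rfl⟩ : ∃ j, j ≤ m+2 ∧ k = 3*m+5+j := ⟨k-(3*m+5), by omega, by omega⟩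
        rw [seg4 m hj]
        refine le_trans (len_le_of_word _
          (List.replicate j (x 0) ++ (List.replicate (m+1) (x 1)⁻¹ ++ []))
          (hmem _ _ _ hnil) ?_) ?_
        · simp only [List.prod_append, List.prod_replicate, List.prod_nil, mul_one]
        · simp only [List.length_append, List.length_replicate, List.length_nil]
          omega
      · subst h5
        rw [seg5 m]
        refine le_trans (len_le_of_word _
          ([x 1] ++ (List.replicate (m+2) (x 0) ++ (List.replicate (m+1) (x 1)⁻¹ ++ [])))
          ?_ ?_) ?_
        · intro g hg
          simp only [List.singleton_append, List.mem_cons] at hg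
          rcases hg with rfl | hg
          · simp [gens]
          · exact hmem _ _ _ hnil g hg
        · simp only [List.prod_append, List.prod_replicate, List.prod_cons, List.prod_nil,
            mul_one]
          group
        · simp only [List.length_append, List.length_replicate, List.length_cons,
            List.length_nil]
          omega
  exact ⟨⟨_, hpath⟩, hpath⟩


end ThompsonF
end
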